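/- Let X be a real-valued integrable random variable with finite variance on a probability space, let μ = E[X], let m > 0 satisfy m > |μ|, and let Z = max(min(X, m), −m) be the truncation of X to [−m, m]. Then E[exp((Z − μ)/m)] ≤ exp( Var[X] / (m(m − |μ|)) ). -/

import Mathlib

open MeasureTheory ProbabilityTheory Real

lemma exp_le_quad_neg {y : ℝ} (hy : y ≤ 0) : Real.exp y ≤ 1 + y + y ^ 2 / 2 := by
  have key : AntitoneOn (fun y : ℝ => 1 + y + y ^ 2 / 2 - Real.exp y) (Set.Iic 0) := by
    apply antitoneOn_of_deriv_nonpos (convex_Iic 0)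
    · fun_prop
    · fun_prop
    · intro x hx
      have hD : HasDerivAt (fun y : ℝ => 1 + y + y ^ 2 / 2 - Real.exp y)
          (((0 + 1) + 2 * x ^ 1 / 2) - Real.exp x) x :=
        (((hasDerivAt_const x (1:ℝ)).add (hasDerivAt_id x)).add
          ((hasDerivAt_pow 2 x).div_const 2)).sub (Real.hasDerivAt_exp x)
      rw [hD.deriv]
      have := Real.add_one_le_exp x
      nlinarith
  have h0 := key (Set.mem_Iic.2 hy) (Set.mem_Iic.2 le_rfl) hy
  simp only [Real.exp_zero] at h0
  nlinarith

lemma exp_le_cubic {y : ℝ} (hy : 0 ≤ y) :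
    Real.exp y ≤ 1 + y + y ^ 2 / 2 + y ^ 3 * Real.exp y / 6 := by
  have key : MonotoneOn
      (fun y : ℝ => (1 + y + y ^ 2 / 2) * Real.exp (-y) + y ^ 3 / 6) (Set.Ici 0) := by
    apply monotoneOn_of_deriv_nonneg (convex_Ici 0)
    · fun_prop
    · fun_prop
    · intro x hx
      have hx0 : 0 ≤ x := le_of_lt (by simpa using hx)
      have hE : HasDerivAt (fun y : ℝ => Real.exp (-y)) (Real.exp (-x) * (-1)) x :=
        (Real.hasDerivAt_exp (-x)).comp x ((hasDerivAt_id x).neg)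
      have hD : HasDerivAt (fun y : ℝ => (1 + y + y ^ 2 / 2) * Real.exp (-y) + y ^ 3 / 6)
          ((((0 + 1) + 2 * x ^ 1 / 2) * Real.exp (-x)
            + (1 + x + x ^ 2 / 2) * (Real.exp (-x) * (-1))) + 3 * x ^ 2 / 6) x :=
        ((((hasDerivAt_const x (1:ℝ)).add (hasDerivAt_id x)).add
          ((hasDerivAt_pow 2 x).div_const 2)).mul hE).add ((hasDerivAt_pow 3 x).div_const 6)
      rw [hD.deriv]
      have h1 : Real.exp (-x) ≤ 1 := Real.exp_le_one_iff.2 (by linarith)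
      nlinarith [sq_nonneg x, Real.exp_pos (-x)]
  have h0 := key (Set.mem_Ici.2 le_rfl) (Set.mem_Ici.2 hy) hy
  simp only [neg_zero, Real.exp_zero] at h0
  have hpos : 0 < Real.exp y := Real.exp_pos y
  rw [Real.exp_neg y] at h0
  have hm := mul_le_mul_of_nonneg_right h0 hpos.le
  have hinv : (Real.exp y)⁻¹ * Real.exp y = 1 := inv_mul_cancel₀ hpos.ne'
  nlinarith [hm, hinv]

lemma exp_le_quad {b y : ℝ} (hb0 : 0 ≤ b) (hb1 : b < 1) (hy : y ≤ 1 + b) :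
    Real.exp y ≤ 1 + y + y ^ 2 / (1 - b) := by
  have h1b : (0:ℝ) < 1 - b := by linarith
  rcases le_or_gt y 0 with h | h
  · have := exp_le_quad_neg h
    have h2 : y ^ 2 / 2 ≤ y ^ 2 / (1 - b) :=
      div_le_div_of_nonneg_left (sq_nonneg y) h1b (by linarith)
    linarith
  · have h1 := exp_le_cubic h.le
    have h2 : y * Real.exp y ≤ (1 + b) * Real.exp (1 + b) :=
      mul_le_mul hy (Real.exp_le_exp.2 hy) (Real.exp_pos y).le (by linarith)
    have h3 : (1 - b) * Real.exp (1 + b) ≤ 3 := by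
      have hb : (1 - b) * Real.exp b ≤ 1 := by
        have h4 := Real.add_one_le_exp (-b)
        have h5 := mul_le_mul_of_nonneg_right h4 (Real.exp_pos b).le
        rw [← Real.exp_add] at h5
        simp only [neg_add_cancel, Real.exp_zero] at h5
        nlinarith [h5]
      have he : Real.exp (1 + b) = Real.exp 1 * Real.exp b := Real.exp_add 1 b
      have h3' : Real.exp 1 ≤ 3 := by
        have := Real.exp_one_lt_d9; linarith
      calc (1 - b) * Real.exp (1 + b) = Real.exp 1 * ((1 - b) * Real.exp b) := by
            rw [he]; ring
        _ ≤ 3 * 1 := mul_le_mul h3' hb (by nlinarith [Real.exp_pos b]) (by norm_num)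
        _ = 3 := by norm_num
    have h2' : y ^ 2 * (y * Real.exp y) ≤ y ^ 2 * ((1 + b) * Real.exp (1 + b)) :=
      mul_le_mul_of_nonneg_left h2 (sq_nonneg y)
    have h3'' : y ^ 2 * ((1 - b) * ((1 + b) * Real.exp (1 + b))) ≤ y ^ 2 * (3 * (1 + b)) := by
      apply mul_le_mul_of_nonneg_left _ (sq_nonneg y)
      nlinarith [Real.exp_pos (1 + b)]
    have hA := mul_le_mul_of_nonneg_right h1 h1b.le
    have hB := mul_le_mul_of_nonneg_right h2' h1b.le
    have hkey : (Real.exp y - 1 - y) * (1 - b) ≤ y ^ 2 := by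
      nlinarith [hA, hB, h3'', sq_nonneg y]
    have := (le_div_iff₀ h1b).2 hkey
    linarith

lemma trunc_quad_ineq {x μ m : ℝ} (hm : 0 < m) (hmE : |μ| < m) :
    (m - |μ|) * (max (min x m) (-m) - x) + (max (min x m) (-m) - μ) ^ 2 ≤ (x - μ) ^ 2 := by
  have h1 : -|μ| ≤ μ := neg_abs_le μ
  have h2 : μ ≤ |μ| := le_abs_self μ
  rcases le_total x (-m) with hx | hx
  · have hz : max (min x m) (-m) = -m := by
      rw [min_eq_left (by linarith), max_eq_right hx]
    rw [hz]; nlinarith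
  · rcases le_total x m with hx2 | hx2
    · have hz : max (min x m) (-m) = x := by
        rw [min_eq_left hx2, max_eq_left hx]
      rw [hz]; nlinarith
    · have hz : max (min x m) (-m) = m := by
        rw [min_eq_right hx2, max_eq_left (by linarith)]
      rw [hz]; nlinarith

/-- moment generating function bound for a truncated random variable.
For an integrable real random variable `X` with finite variance, `μ = E[X]`, `m > |μ|`,
and `Z = max (min X m) (-m)`, one has `E[exp((Z - μ)/m)] ≤ exp(Var[X]/(m(m - |μ|)))`. -/
theorem truncation_mgf_bound {Ω : Type*} [MeasureSpace Ω]
    [IsProbabilityMeasure (ℙ : Measure Ω)]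
    (X : Ω → ℝ) (hXint : Integrable X) (hX2 : MemLp X 2 ℙ)
    (μ : ℝ) (hμ : μ = ∫ ω, X ω)
    (m : ℝ) (hm : 0 < m) (hmE : |μ| < m)
    (Z : Ω → ℝ) (hZ : ∀ ω, Z ω = max (min (X ω) m) (-m)) :
    (∫ ω, exp ((Z ω - μ) / m)) ≤ exp (variance X ℙ / (m * (m - |μ|))) := by
  have hmm : 0 < m - |μ| := by linarith
  set D := m * (m - |μ|) with hD
  have hDpos : 0 < D := mul_pos hm hmm
  have hXm : AEMeasurable X ℙ := hXint.aemeasurable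
  have hZeq : Z = fun ω => max (min (X ω) m) (-m) := funext hZ
  have hZm : AEMeasurable Z ℙ := by
    rw [hZeq]; exact (hXm.min aemeasurable_const).max aemeasurable_const
  have hZsm : AEStronglyMeasurable Z ℙ := hZm.aestronglyMeasurable
  have hZbd : ∀ ω, |Z ω| ≤ m := by
    intro ω; rw [hZ ω, abs_le]
    exact ⟨le_max_right _ _, max_le (min_le_right _ _) (by linarith)⟩
  have intZ : Integrable Z ℙ :=
    (integrable_const m).mono' hZsm
      (Filter.Eventually.of_forall fun ω => by simpa [Real.norm_eq_abs] using hZbd ω)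
  have intZX : Integrable (fun ω => Z ω - X ω) ℙ := intZ.sub hXint
  have intZq : Integrable (fun ω => (Z ω - μ) ^ 2) ℙ := by
    refine (integrable_const ((m + |μ|) ^ 2)).mono'
      ((hZm.sub aemeasurable_const).pow_const 2).aestronglyMeasurable
      (Filter.Eventually.of_forall fun ω => ?_)
    rw [Real.norm_eq_abs, abs_of_nonneg (sq_nonneg _)]
    have h1 := (abs_le.1 (hZbd ω)).1
    have h2 := (abs_le.1 (hZbd ω)).2
    nlinarith [le_abs_self μ, neg_abs_le μ, abs_nonneg μ]
  have intXq : Integrable (fun ω => (X ω - μ) ^ 2) ℙ := by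
    have := (hX2.sub (memLp_const μ)).integrable_sq
    simpa using this
  have intExp : Integrable (fun ω => Real.exp ((Z ω - μ) / m)) ℙ := by
    refine (integrable_const (Real.exp ((m + |μ|) / m))).mono'
      (Real.measurable_exp.comp_aemeasurable
        ((hZm.sub aemeasurable_const).div_const m)).aestronglyMeasurable
      (Filter.Eventually.of_forall fun ω => ?_)
    rw [Real.norm_eq_abs, abs_of_pos (Real.exp_pos _)]
    apply Real.exp_le_exp.2
    apply (div_le_div_iff_of_pos_right hm).2
    linarith [(abs_le.1 (hZbd ω)).2, neg_le_abs μ]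
  have hb0 : (0:ℝ) ≤ |μ| / m := by positivity
  have hb1 : |μ| / m < 1 := (div_lt_one hm).2 hmE
  have hpt : ∀ ω, Real.exp ((Z ω - μ) / m) ≤ 1 + (Z ω - μ) / m + (Z ω - μ) ^ 2 / D := by
    intro ω
    have hy : (Z ω - μ) / m ≤ 1 + |μ| / m := by
      rw [div_le_iff₀ hm]
      have h2 := (abs_le.1 (hZbd ω)).2
      have h3 : -μ ≤ |μ| := neg_le_abs μ
      have h4 : (1 + |μ| / m) * m = m + |μ| := by field_simp
      rw [h4]; linarith
    have h := exp_le_quad hb0 hb1 hy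
    have heq : ((Z ω - μ) / m) ^ 2 / (1 - |μ| / m) = (Z ω - μ) ^ 2 / D := by
      rw [hD]; field_simp
    rwa [heq] at h
  have intY : Integrable (fun ω => (Z ω - μ) / m) ℙ :=
    (intZ.sub (integrable_const μ)).div_const m
  have intY1 : Integrable (fun ω => 1 + (Z ω - μ) / m) ℙ := (integrable_const 1).add intY
  have intRHS : Integrable (fun ω => 1 + (Z ω - μ) / m + (Z ω - μ) ^ 2 / D) ℙ :=
    intY1.add (intZq.div_const D)
  have step1 : (∫ ω, Real.exp ((Z ω - μ) / m))
      ≤ ∫ ω, (1 + (Z ω - μ) / m + (Z ω - μ) ^ 2 / D) :=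
    integral_mono intExp intRHS fun ω => hpt ω
  have step2 : (∫ ω, (1 + (Z ω - μ) / m + (Z ω - μ) ^ 2 / D))
      = 1 + (∫ ω, (Z ω - μ)) / m + (∫ ω, (Z ω - μ) ^ 2) / D := by
    rw [integral_add intY1 (intZq.div_const D),
        integral_add (integrable_const 1) intY, integral_const, integral_div, integral_div]
    simp
  have hEZ : (∫ ω, (Z ω - μ)) = ∫ ω, (Z ω - X ω) := by
    rw [integral_sub intZ (integrable_const μ), integral_sub intZ hXint, integral_const]
    simp [hμ]
  have hvar : variance X ℙ = ∫ ω, (X ω - μ) ^ 2 := by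
    rw [variance_eq_integral hX2.aestronglyMeasurable.aemeasurable]
    refine integral_congr_ae (Filter.Eventually.of_forall fun ω => ?_)
    simp [hμ]
  have key : (m - |μ|) * (∫ ω, (Z ω - X ω)) + (∫ ω, (Z ω - μ) ^ 2) ≤ variance X ℙ := by
    rw [hvar, ← integral_const_mul, ← integral_add (intZX.const_mul _) intZq]
    refine integral_mono ((intZX.const_mul _).add intZq) intXq fun ω => ?_
    simpa [hZ ω] using trunc_quad_ineq (x := X ω) (μ := μ) (m := m) hm hmE
  have hsum : 1 + (∫ ω, (Z ω - μ)) / m + (∫ ω, (Z ω - μ) ^ 2) / D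
      ≤ 1 + variance X ℙ / D := by
    rw [hEZ]
    have h5 : (∫ ω, (Z ω - X ω)) / m = ((m - |μ|) * ∫ ω, (Z ω - X ω)) / D := by
      rw [hD]; field_simp
    rw [add_assoc, h5, ← add_div]
    have h6 := (div_le_div_iff_of_pos_right hDpos).2 key
    linarith
  calc (∫ ω, Real.exp ((Z ω - μ) / m))
      ≤ ∫ ω, (1 + (Z ω - μ) / m + (Z ω - μ) ^ 2 / D) := step1
    _ = 1 + (∫ ω, (Z ω - μ)) / m + (∫ ω, (Z ω - μ) ^ 2) / D := step2
    _ ≤ 1 + variance X ℙ / D := hsum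
    _ ≤ Real.exp (variance X ℙ / D) := by
        linarith [Real.add_one_le_exp (variance X ℙ / D)]
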